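/- The same kernel K(x,y) = exp(-2ivy - e^{y-x}) (1 + βe^{-y})^{-iv-g} (1 - βe^{-y})^{-iv+g-1} satisfies the second-order equation ((v - i∂_y)² - (v - i∂_x)² + 2α(∂_y e^{-y} - e^{-x}) + β²((∂_y e^{-y})² - e^{-2x})) K(x,y) = 0 on the domain y > ln β. -/

import Mathlib

noncomputable def reflKer (α β : ℝ) (v : ℂ) (x y : ℝ) : ℂ :=
  Complex.exp (-2 * Complex.I * v * (y : ℂ) - Complex.exp ((y - x : ℝ) : ℂ)) *
    ((1 + β * Real.exp (-y) : ℝ) : ℂ) ^ (-Complex.I * v - ((1 / 2 + α / β : ℝ) : ℂ)) *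
    ((1 - β * Real.exp (-y) : ℝ) : ℂ) ^ (-Complex.I * v + ((1 / 2 + α / β : ℝ) : ℂ) - 1)

noncomputable def rkQ (α β : ℝ) (v : ℂ) (x t : ℝ) : ℂ :=
  -2 * Complex.I * v * t - Complex.exp ((t : ℂ) - x)
  + (-Complex.I * v - ((1 / 2 + α / β : ℝ) : ℂ)) * ((Real.log (1 + β * Real.exp (-t)) : ℝ) : ℂ)
  + (-Complex.I * v + ((1 / 2 + α / β : ℝ) : ℂ) - 1) * ((Real.log (1 - β * Real.exp (-t)) : ℝ) : ℂ)

noncomputable def rkD (α β : ℝ) (v : ℂ) (x t : ℝ) : ℂ :=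
  -2 * Complex.I * v - Complex.exp ((t : ℂ) - x)
  + (-Complex.I * v - ((1 / 2 + α / β : ℝ) : ℂ)) * ((-(β * Real.exp (-t)) / (1 + β * Real.exp (-t)) : ℝ) : ℂ)
  + (-Complex.I * v + ((1 / 2 + α / β : ℝ) : ℂ) - 1) * ((β * Real.exp (-t) / (1 - β * Real.exp (-t)) : ℝ) : ℂ)

noncomputable def rkE (α β : ℝ) (v : ℂ) (x t : ℝ) : ℂ :=
  -Complex.exp ((t : ℂ) - x)
  + (-Complex.I * v - ((1 / 2 + α / β : ℝ) : ℂ)) * ((β * Real.exp (-t) / (1 + β * Real.exp (-t)) ^ 2 : ℝ) : ℂ)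
  + (-Complex.I * v + ((1 / 2 + α / β : ℝ) : ℂ) - 1) * ((-(β * Real.exp (-t)) / (1 - β * Real.exp (-t)) ^ 2 : ℝ) : ℂ)

lemma rk_ult1 {β : ℝ} (hβ : 0 < β) {t : ℝ} (ht : Real.log β < t) : β * Real.exp (-t) < 1 := by
  have h1 : β < Real.exp t := by
    rw [← Real.exp_log hβ]; exact Real.exp_lt_exp.mpr ht
  calc β * Real.exp (-t) < Real.exp t * Real.exp (-t) :=
        mul_lt_mul_of_pos_right h1 (Real.exp_pos _)
    _ = 1 := by rw [← Real.exp_add]; simp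

lemma rk_kerEq (α : ℝ) {β : ℝ} (v : ℂ) (x : ℝ) (hβ : 0 < β) {t : ℝ} (ht : Real.log β < t) :
    reflKer α β v x t = Complex.exp (rkQ α β v x t) := by
  have h1 : (0:ℝ) < 1 + β * Real.exp (-t) := by positivity
  have h2 : (0:ℝ) < 1 - β * Real.exp (-t) := by linarith [rk_ult1 hβ ht]
  unfold reflKer rkQ
  rw [Complex.cpow_def_of_ne_zero (Complex.ofReal_ne_zero.mpr h1.ne'),
      Complex.cpow_def_of_ne_zero (Complex.ofReal_ne_zero.mpr h2.ne'),
      ← Complex.ofReal_log h1.le, ← Complex.ofReal_log h2.le,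
      ← Complex.exp_add, ← Complex.exp_add]
  congr 1
  push_cast
  ring

lemma rk_hasDerivAt_Q (α : ℝ) {β : ℝ} (v : ℂ) (x : ℝ) (hβ : 0 < β) {t : ℝ}
    (ht : Real.log β < t) :
    HasDerivAt (fun s => rkQ α β v x s) (rkD α β v x t) t := by
  have h1 : (0:ℝ) < 1 + β * Real.exp (-t) := by positivity
  have h2 : (0:ℝ) < 1 - β * Real.exp (-t) := by linarith [rk_ult1 hβ ht]
  have hu : HasDerivAt (fun s : ℝ => β * Real.exp (-s)) (β * (Real.exp (-t) * -1)) t :=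
    ((hasDerivAt_neg t).exp).const_mul β
  have c1 : HasDerivAt (fun s : ℝ => -2 * Complex.I * v * (s : ℂ)) (-2 * Complex.I * v * 1) t :=
    Complex.ofRealCLM.hasDerivAt.const_mul (-2 * Complex.I * v)
  have c2 : HasDerivAt (fun s : ℝ => Complex.exp ((s : ℂ) - x))
      (Complex.exp ((t : ℂ) - x) * 1) t :=
    (Complex.ofRealCLM.hasDerivAt.sub_const (x : ℂ)).cexp
  have c3 : HasDerivAt (fun s : ℝ => Real.log (1 + β * Real.exp (-s)))
      ((0 + β * (Real.exp (-t) * -1)) / (1 + β * Real.exp (-t))) t :=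
    ((hasDerivAt_const t (1:ℝ)).add hu).log h1.ne'
  have c4 : HasDerivAt (fun s : ℝ => Real.log (1 - β * Real.exp (-s)))
      ((0 - β * (Real.exp (-t) * -1)) / (1 - β * Real.exp (-t))) t :=
    ((hasDerivAt_const t (1:ℝ)).sub hu).log h2.ne'
  have H := ((c1.sub c2).add
      (c3.ofReal_comp.const_mul (-Complex.I * v - ((1 / 2 + α / β : ℝ) : ℂ)))).add
      (c4.ofReal_comp.const_mul (-Complex.I * v + ((1 / 2 + α / β : ℝ) : ℂ) - 1))
  convert H using 1
  · rfl
  · rfl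
  unfold rkD
  push_cast
  ring

lemma rk_hasDerivAt_D (α : ℝ) {β : ℝ} (v : ℂ) (x : ℝ) (hβ : 0 < β) {t : ℝ}
    (ht : Real.log β < t) :
    HasDerivAt (fun s => rkD α β v x s) (rkE α β v x t) t := by
  have h1 : (0:ℝ) < 1 + β * Real.exp (-t) := by positivity
  have h2 : (0:ℝ) < 1 - β * Real.exp (-t) := by linarith [rk_ult1 hβ ht]
  have hu : HasDerivAt (fun s : ℝ => β * Real.exp (-s)) (β * (Real.exp (-t) * -1)) t :=
    ((hasDerivAt_neg t).exp).const_mul β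
  have c2 : HasDerivAt (fun s : ℝ => Complex.exp ((s : ℂ) - x))
      (Complex.exp ((t : ℂ) - x) * 1) t :=
    (Complex.ofRealCLM.hasDerivAt.sub_const (x : ℂ)).cexp
  have q1 : HasDerivAt (fun s : ℝ => -(β * Real.exp (-s)) / (1 + β * Real.exp (-s)))
      ((-(β * (Real.exp (-t) * -1)) * (1 + β * Real.exp (-t)) -
        -(β * Real.exp (-t)) * (0 + β * (Real.exp (-t) * -1))) / (1 + β * Real.exp (-t)) ^ 2) t :=
    (hu.neg).div ((hasDerivAt_const t (1:ℝ)).add hu) h1.ne'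
  have q2 : HasDerivAt (fun s : ℝ => β * Real.exp (-s) / (1 - β * Real.exp (-s)))
      ((β * (Real.exp (-t) * -1) * (1 - β * Real.exp (-t)) -
        β * Real.exp (-t) * (0 - β * (Real.exp (-t) * -1))) / (1 - β * Real.exp (-t)) ^ 2) t :=
    hu.div ((hasDerivAt_const t (1:ℝ)).sub hu) h2.ne'
  have H := (((hasDerivAt_const t (-2 * Complex.I * v)).sub c2).add
      (q1.ofReal_comp.const_mul (-Complex.I * v - ((1 / 2 + α / β : ℝ) : ℂ)))).add
      (q2.ofReal_comp.const_mul (-Complex.I * v + ((1 / 2 + α / β : ℝ) : ℂ) - 1))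
  convert H using 1
  · rfl
  · rfl
  unfold rkE
  have e1 : (1 + β * Real.exp (-t)) ≠ 0 := h1.ne'
  have e2 : (1 - β * Real.exp (-t)) ≠ 0 := h2.ne'
  push_cast
  field_simp
  ring

set_option maxHeartbeats 2000000 in
/-- The second-order relation
`((v - i∂_y)² - (v - i∂_x)² + 2α(∂_y e^{-y} - e^{-x}) + β²((∂_y e^{-y})² - e^{-2x})) K = 0`,
where `(v - i∂)² = v² - 2iv∂ - ∂²` and `∂_y e^{-y}` means `f ↦ ∂_y (e^{-y} f)`. -/
theorem stmt10 (α β : ℝ) (hβ : 0 < β) (v : ℂ) (x y : ℝ) (hy : Real.log β < y) :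
    (v ^ 2 * reflKer α β v x y - 2 * Complex.I * v * deriv (fun t => reflKer α β v x t) y
        - deriv (deriv (fun t => reflKer α β v x t)) y)
      - (v ^ 2 * reflKer α β v x y - 2 * Complex.I * v * deriv (fun t => reflKer α β v t y) x
        - deriv (deriv (fun t => reflKer α β v t y)) x)
      + 2 * (α : ℂ) *
        (deriv (fun t => Complex.exp ((-t : ℝ) : ℂ) * reflKer α β v x t) y
          - Complex.exp ((-x : ℝ) : ℂ) * reflKer α β v x y)
      + (β : ℂ) ^ 2 *
        (deriv (fun t => Complex.exp ((-t : ℝ) : ℂ) *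
            deriv (fun s => Complex.exp ((-s : ℝ) : ℂ) * reflKer α β v x s) t) y
          - Complex.exp ((-2 * x : ℝ) : ℂ) * reflKer α β v x y) = 0 := by
  -- y-direction derivatives
  have hfy : ∀ t, Real.log β < t →
      HasDerivAt (fun s => reflKer α β v x s)
        (Complex.exp (rkQ α β v x t) * rkD α β v x t) t := by
    intro t ht
    exact ((rk_hasDerivAt_Q α v x hβ ht).cexp).congr_of_eventuallyEq
      (Filter.eventuallyEq_of_mem (Ioi_mem_nhds ht) fun s hs => rk_kerEq α v x hβ hs)
  have hQy := rk_hasDerivAt_Q α v x hβ hy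
  have hDy := rk_hasDerivAt_D α v x hβ hy
  have d1 : deriv (fun t => reflKer α β v x t) y
      = Complex.exp (rkQ α β v x y) * rkD α β v x y := (hfy y hy).deriv
  have hde : deriv (fun t => reflKer α β v x t)
      =ᶠ[nhds y] fun t => Complex.exp (rkQ α β v x t) * rkD α β v x t :=
    Filter.eventuallyEq_of_mem (Ioi_mem_nhds hy) fun t ht => (hfy t ht).deriv
  have d2 : deriv (deriv (fun t => reflKer α β v x t)) y
      = Complex.exp (rkQ α β v x y) * rkD α β v x y * rkD α β v x y
        + Complex.exp (rkQ α β v x y) * rkE α β v x y := by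
    rw [hde.deriv_eq]
    exact ((hQy.cexp).mul hDy).deriv
  -- operator term A
  have hA : ∀ t, Real.log β < t →
      HasDerivAt (fun s => Complex.exp ((-s : ℝ) : ℂ) * reflKer α β v x s)
        (Complex.exp (-(t : ℂ) + rkQ α β v x t) * (-1 + rkD α β v x t)) t := by
    intro t ht
    have h0 : HasDerivAt (fun s : ℝ => -(s : ℂ) + rkQ α β v x s)
        (-1 + rkD α β v x t) t :=
      (Complex.ofRealCLM.hasDerivAt.neg).add (rk_hasDerivAt_Q α v x hβ ht)
    refine h0.cexp.congr_of_eventuallyEq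
      (Filter.eventuallyEq_of_mem (Ioi_mem_nhds ht) fun s hs => ?_)
    rw [rk_kerEq α v x hβ hs, ← Complex.exp_add]
    congr 1
    push_cast
    ring
  have d3 : deriv (fun t => Complex.exp ((-t : ℝ) : ℂ) * reflKer α β v x t) y
      = Complex.exp (-(y : ℂ) + rkQ α β v x y) * (-1 + rkD α β v x y) := (hA y hy).deriv
  -- operator term B
  have hGev : (fun t => Complex.exp ((-t : ℝ) : ℂ) *
        deriv (fun s => Complex.exp ((-s : ℝ) : ℂ) * reflKer α β v x s) t)
      =ᶠ[nhds y] fun t => Complex.exp (-(2 * (t : ℂ)) + rkQ α β v x t)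
        * (-1 + rkD α β v x t) := by
    refine Filter.eventuallyEq_of_mem (Ioi_mem_nhds hy) fun t ht => ?_
    rw [(hA t ht).deriv, ← mul_assoc, ← Complex.exp_add]
    congr 2
    push_cast
    ring
  have hG : HasDerivAt (fun t : ℝ => Complex.exp (-(2 * (t : ℂ)) + rkQ α β v x t)
        * (-1 + rkD α β v x t))
      (Complex.exp (-(2 * (y : ℂ)) + rkQ α β v x y) * (-(2 * 1) + rkD α β v x y)
          * (-1 + rkD α β v x y)
        + Complex.exp (-(2 * (y : ℂ)) + rkQ α β v x y) * rkE α β v x y) y := by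
    have h1 : HasDerivAt (fun t : ℝ => -(2 * (t : ℂ)) + rkQ α β v x t)
        (-(2 * 1) + rkD α β v x y) y :=
      ((Complex.ofRealCLM.hasDerivAt.const_mul (2 : ℂ)).neg).add hQy
    exact (h1.cexp).mul (hDy.const_add (-1))
  have d4 : deriv (fun t => Complex.exp ((-t : ℝ) : ℂ) *
        deriv (fun s => Complex.exp ((-s : ℝ) : ℂ) * reflKer α β v x s) t) y
      = Complex.exp (-(2 * (y : ℂ)) + rkQ α β v x y) * (-(2 * 1) + rkD α β v x y)
          * (-1 + rkD α β v x y)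
        + Complex.exp (-(2 * (y : ℂ)) + rkQ α β v x y) * rkE α β v x y := by
    rw [hGev.deriv_eq]
    exact hG.deriv
  -- x-direction derivatives
  set c : ℂ := ((1 + β * Real.exp (-y) : ℝ) : ℂ) ^ (-Complex.I * v - ((1 / 2 + α / β : ℝ) : ℂ)) *
      ((1 - β * Real.exp (-y) : ℝ) : ℂ) ^ (-Complex.I * v + ((1 / 2 + α / β : ℝ) : ℂ) - 1) with hc
  have hker_x : ∀ t : ℝ, reflKer α β v t y
      = Complex.exp (-2 * Complex.I * v * (y : ℂ) - Complex.exp ((y : ℂ) - (t : ℂ))) * c := by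
    intro t
    unfold reflKer
    rw [hc]
    push_cast
    ring
  have hx1 : ∀ t : ℝ, HasDerivAt (fun s => reflKer α β v s y)
      (reflKer α β v t y * Complex.exp ((y : ℂ) - (t : ℂ))) t := by
    intro t
    have hW : HasDerivAt (fun s : ℝ =>
        -2 * Complex.I * v * (y : ℂ) - Complex.exp ((y : ℂ) - (s : ℂ)))
        (-(Complex.exp ((y : ℂ) - (t : ℂ)) * -1)) t :=
      ((Complex.ofRealCLM.hasDerivAt.const_sub ((y : ℂ))).cexp).const_sub
        (-2 * Complex.I * v * (y : ℂ))
    have H := (hW.cexp).mul_const c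
    have H2 : HasDerivAt (fun s => reflKer α β v s y)
        (Complex.exp (-2 * Complex.I * v * (y : ℂ) - Complex.exp ((y : ℂ) - (t : ℂ)))
          * -(Complex.exp ((y : ℂ) - (t : ℂ)) * -1) * c) t :=
      H.congr_of_eventuallyEq (Filter.Eventually.of_forall fun s => hker_x s)
    convert H2 using 1
    rw [hker_x t]
    ring
  have d5 : deriv (fun t => reflKer α β v t y) x
      = reflKer α β v x y * Complex.exp ((y : ℂ) - (x : ℂ)) := (hx1 x).deriv
  have hE2 : HasDerivAt (fun s : ℝ => Complex.exp ((y : ℂ) - (s : ℂ)))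
      (Complex.exp ((y : ℂ) - (x : ℂ)) * -1) x :=
    (Complex.ofRealCLM.hasDerivAt.const_sub ((y : ℂ))).cexp
  have d6 : deriv (deriv (fun t => reflKer α β v t y)) x
      = reflKer α β v x y * Complex.exp ((y : ℂ) - (x : ℂ)) * Complex.exp ((y : ℂ) - (x : ℂ))
        + reflKer α β v x y * (Complex.exp ((y : ℂ) - (x : ℂ)) * -1) := by
    have hfun : deriv (fun t => reflKer α β v t y)
        = fun t => reflKer α β v t y * Complex.exp ((y : ℂ) - (t : ℂ)) :=
      funext fun t => (hx1 t).deriv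
    rw [hfun]
    exact ((hx1 x).mul hE2).deriv
  -- assemble
  rw [d1, d2, d3, d4, d5, d6, rk_kerEq α v x hβ hy]
  have hE3 : Complex.exp (-(y : ℂ) + rkQ α β v x y)
      = Complex.exp (-(y : ℂ)) * Complex.exp (rkQ α β v x y) := Complex.exp_add _ _
  have hE4 : Complex.exp (-(2 * (y : ℂ)) + rkQ α β v x y)
      = Complex.exp (-(y : ℂ)) * Complex.exp (-(y : ℂ)) * Complex.exp (rkQ α β v x y) := by
    rw [← Complex.exp_add, ← Complex.exp_add]
    ring_nf
  have hE5 : Complex.exp ((-x : ℝ) : ℂ)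
      = Complex.exp ((y : ℂ) - (x : ℂ)) * Complex.exp (-(y : ℂ)) := by
    rw [← Complex.exp_add]
    congr 1
    push_cast
    ring
  have hE6 : Complex.exp ((-2 * x : ℝ) : ℂ)
      = Complex.exp ((y : ℂ) - (x : ℂ)) * Complex.exp ((y : ℂ) - (x : ℂ))
        * (Complex.exp (-(y : ℂ)) * Complex.exp (-(y : ℂ))) := by
    rw [← Complex.exp_add, ← Complex.exp_add, ← Complex.exp_add]
    congr 1
    push_cast
    ring
  rw [hE3, hE4, hE5, hE6]
  have hw : ((Real.exp (-y) : ℝ) : ℂ) = Complex.exp (-(y : ℂ)) := by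
    rw [Complex.ofReal_exp, Complex.ofReal_neg]
  have hne1 : (1 : ℂ) + ↑β * Complex.exp (-(y : ℂ)) ≠ 0 := by
    rw [show (1 : ℂ) + ↑β * Complex.exp (-(y : ℂ)) = ((1 + β * Real.exp (-y) : ℝ) : ℂ) by
      push_cast; ring]
    exact Complex.ofReal_ne_zero.mpr (by positivity)
  have hne2 : (1 : ℂ) - ↑β * Complex.exp (-(y : ℂ)) ≠ 0 := by
    rw [show (1 : ℂ) - ↑β * Complex.exp (-(y : ℂ)) = ((1 - β * Real.exp (-y) : ℝ) : ℂ) by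
      push_cast; ring]
    exact Complex.ofReal_ne_zero.mpr (by linarith [rk_ult1 hβ hy])
  have hneβ : (β : ℂ) ≠ 0 := Complex.ofReal_ne_zero.mpr hβ.ne'
  have hDc : rkD α β v x y *
      ((1 + ↑β * Complex.exp (-(y : ℂ))) * (1 - ↑β * Complex.exp (-(y : ℂ))) * (2 * ↑β))
      = (-2 * Complex.I * v - Complex.exp ((y : ℂ) - (x : ℂ))) *
          ((1 + ↑β * Complex.exp (-(y : ℂ))) * (1 - ↑β * Complex.exp (-(y : ℂ)))) * (2 * ↑β)
        + (2 * Complex.I * ↑β * v + ↑β + 2 * ↑α) * (↑β * Complex.exp (-(y : ℂ))) *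
            (1 - ↑β * Complex.exp (-(y : ℂ)))
        + (-2 * Complex.I * ↑β * v - ↑β + 2 * ↑α) * (↑β * Complex.exp (-(y : ℂ))) *
            (1 + ↑β * Complex.exp (-(y : ℂ))) := by
    simp only [rkD]
    push_cast
    field_simp
    ring
  have hD2 : (rkD α β v x y *
      ((1 + ↑β * Complex.exp (-(y : ℂ))) * (1 - ↑β * Complex.exp (-(y : ℂ))) * (2 * ↑β))) *
      (rkD α β v x y *
      ((1 + ↑β * Complex.exp (-(y : ℂ))) * (1 - ↑β * Complex.exp (-(y : ℂ))) * (2 * ↑β)))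
      = ((-2 * Complex.I * v - Complex.exp ((y : ℂ) - (x : ℂ))) *
          ((1 + ↑β * Complex.exp (-(y : ℂ))) * (1 - ↑β * Complex.exp (-(y : ℂ)))) * (2 * ↑β)
        + (2 * Complex.I * ↑β * v + ↑β + 2 * ↑α) * (↑β * Complex.exp (-(y : ℂ))) *
            (1 - ↑β * Complex.exp (-(y : ℂ)))
        + (-2 * Complex.I * ↑β * v - ↑β + 2 * ↑α) * (↑β * Complex.exp (-(y : ℂ))) *
            (1 + ↑β * Complex.exp (-(y : ℂ)))) *
        ((-2 * Complex.I * v - Complex.exp ((y : ℂ) - (x : ℂ))) *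
          ((1 + ↑β * Complex.exp (-(y : ℂ))) * (1 - ↑β * Complex.exp (-(y : ℂ)))) * (2 * ↑β)
        + (2 * Complex.I * ↑β * v + ↑β + 2 * ↑α) * (↑β * Complex.exp (-(y : ℂ))) *
            (1 - ↑β * Complex.exp (-(y : ℂ)))
        + (-2 * Complex.I * ↑β * v - ↑β + 2 * ↑α) * (↑β * Complex.exp (-(y : ℂ))) *
            (1 + ↑β * Complex.exp (-(y : ℂ)))) := by rw [hDc]
  have hEc : rkE α β v x y *
      (((1 + ↑β * Complex.exp (-(y : ℂ))) * (1 - ↑β * Complex.exp (-(y : ℂ)))) *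
        ((1 + ↑β * Complex.exp (-(y : ℂ))) * (1 - ↑β * Complex.exp (-(y : ℂ)))) * (2 * ↑β))
      = -Complex.exp ((y : ℂ) - (x : ℂ)) *
          ((1 + ↑β * Complex.exp (-(y : ℂ))) * (1 - ↑β * Complex.exp (-(y : ℂ)))) ^ 2 * (2 * ↑β)
        + (-2 * Complex.I * ↑β * v - ↑β - 2 * ↑α) * (↑β * Complex.exp (-(y : ℂ))) *
            (1 - ↑β * Complex.exp (-(y : ℂ))) ^ 2
        + (2 * Complex.I * ↑β * v + ↑β - 2 * ↑α) * (↑β * Complex.exp (-(y : ℂ))) *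
            (1 + ↑β * Complex.exp (-(y : ℂ))) ^ 2 := by
    simp only [rkE]
    push_cast
    field_simp
    ring
  have hnz : (((1 + ↑β * Complex.exp (-(y : ℂ))) * (1 - ↑β * Complex.exp (-(y : ℂ)))
      * (2 * ↑β)) : ℂ) ^ 2 ≠ 0 :=
    pow_ne_zero _ (mul_ne_zero (mul_ne_zero hne1 hne2) (mul_ne_zero two_ne_zero hneβ))
  apply mul_left_cancel₀ hnz
  rw [mul_zero]
  linear_combination
    ((↑β : ℂ) ^ 2 * Complex.exp (-(y : ℂ)) ^ 2 * Complex.exp (rkQ α β v x y)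
        - Complex.exp (rkQ α β v x y)) * hD2
    + ((-2 * Complex.I * v * Complex.exp (rkQ α β v x y)
        + 2 * ↑α * Complex.exp (-(y : ℂ)) * Complex.exp (rkQ α β v x y)
        - 3 * (↑β : ℂ) ^ 2 * Complex.exp (-(y : ℂ)) ^ 2 * Complex.exp (rkQ α β v x y)) *
        ((1 + ↑β * Complex.exp (-(y : ℂ))) * (1 - ↑β * Complex.exp (-(y : ℂ))) * (2 * ↑β))) * hDc
    + (((↑β : ℂ) ^ 2 * Complex.exp (-(y : ℂ)) ^ 2 * Complex.exp (rkQ α β v x y)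
        - Complex.exp (rkQ α β v x y)) * (2 * ↑β)) * hEc
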